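/- arXiv:2109.08506 — 2 statements merged into one kernel-verified Lean document; each statement's English description precedes it below -/
import Mathlib

section
/- Let (M,μ) be a σ-finite measure space and f₁, f₂ : M → [−∞,∞] measurable functions whose distribution functions are finite for every s > 0. Suppose the supports of f₁ and f₂ are disjoint, μ(supp f₁) = z < ∞, and |f₁(x)| ≥ ‖f₂‖_∞ for μ-a.e. x with f₁(x) ≠ 0. Then: (i) (f₁+f₂)^*(u) = f₁^*(u) for 0 < u < z; (ii) (f₁+f₂)^*(u) = f₂^*(u−z) for u > z; (iii) (f₁+f₂)^{**}(u) = f₁^{**}(u) for 0 < u ≤ z. -/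
open MeasureTheory
open scoped ENNReal

noncomputable section

/-- The distribution function `m_f(s) = μ({x : |f(x)| > s})`. -/
def distFn {M : Type*} [MeasurableSpace M] (μ : Measure M) (f : M → ℝ) (s : ℝ) : ℝ≥0∞ :=
  μ {x | s < |f x|}

/-- The decreasing rearrangement `f^*(t) = inf {s ≥ 0 : m_f(s) ≤ t}`. -/
def rearr {M : Type*} [MeasurableSpace M] (μ : Measure M) (f : M → ℝ) (t : ℝ) : ℝ :=
  sInf {s : ℝ | 0 ≤ s ∧ distFn μ f s ≤ ENNReal.ofReal t}

/-- The maximal function `f^{**}(t) = (1/t) ∫₀^t f^*(u) du`. -/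
def rearrMax {M : Type*} [MeasurableSpace M] (μ : Measure M) (f : M → ℝ) (t : ℝ) : ℝ :=
  (1 / t) * ∫ u in Set.Ioc (0 : ℝ) t, rearr μ f u

/-- Rearrangement of a sum of two functions with disjoint supports, the first dominating
the sup-norm of the second on its support. -/
theorem rearrangement_sum_disjoint_supports
    {M : Type*} [MeasurableSpace M] (μ : Measure M) [SigmaFinite μ]
    (f₁ f₂ : M → ℝ) (h₁ : Measurable f₁) (h₂ : Measurable f₂)
    (hd₁ : ∀ s > (0 : ℝ), distFn μ f₁ s < ⊤) (hd₂ : ∀ s > (0 : ℝ), distFn μ f₂ s < ⊤)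
    (hdisj : Disjoint (Function.support f₁) (Function.support f₂))
    (z : ℝ) (hz : 0 ≤ z) (hsupp : μ (Function.support f₁) = ENNReal.ofReal z)
    (hbound : ∀ᵐ x ∂μ, f₁ x ≠ 0 → eLpNorm f₂ ⊤ μ ≤ ENNReal.ofReal |f₁ x|) :
    (∀ u : ℝ, 0 < u → u < z → rearr μ (f₁ + f₂) u = rearr μ f₁ u) ∧
    (∀ u : ℝ, z < u → rearr μ (f₁ + f₂) u = rearr μ f₂ (u - z)) ∧
    (∀ u : ℝ, 0 < u → u ≤ z → rearrMax μ (f₁ + f₂) u = rearrMax μ f₁ u) := by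
  classical
  set N := eLpNorm f₂ ⊤ μ with hN
  -- pointwise disjointness of supports
  have hpt : ∀ x, f₁ x = 0 ∨ f₂ x = 0 := by
    intro x
    by_contra h
    push_neg at h
    exact Set.disjoint_left.mp hdisj h.1 h.2
  have hsub1 : ∀ s : ℝ, 0 ≤ s → {x | s < |f₁ x|} ⊆ Function.support f₁ := by
    intro s hs x hx h0
    simp only [Set.mem_setOf_eq, h0, abs_zero] at hx
    linarith
  have hsub2 : ∀ s : ℝ, 0 ≤ s → {x | s < |f₂ x|} ⊆ Function.support f₂ := by
    intro s hs x hx h0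
    simp only [Set.mem_setOf_eq, h0, abs_zero] at hx
    linarith
  have hmeas2 : ∀ s : ℝ, MeasurableSet {x | s < |f₂ x|} :=
    fun s => measurableSet_lt measurable_const h₂.abs
  have hunion : ∀ s : ℝ, 0 ≤ s →
      {x | s < |(f₁ + f₂) x|} = {x | s < |f₁ x|} ∪ {x | s < |f₂ x|} := by
    intro s hs
    ext x
    simp only [Set.mem_setOf_eq, Set.mem_union, Pi.add_apply]
    rcases hpt x with h | h
    · rw [h, zero_add, abs_zero]
      constructor
      · exact Or.inr
      · rintro (h' | h') <;> [linarith; exact h']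
    · rw [h, add_zero, abs_zero]
      constructor
      · exact Or.inl
      · rintro (h' | h') <;> [exact h'; linarith]
  have hdist_add : ∀ s : ℝ, 0 ≤ s →
      distFn μ (f₁ + f₂) s = distFn μ f₁ s + distFn μ f₂ s := by
    intro s hs
    unfold distFn
    rw [hunion s hs]
    exact measure_union (hdisj.mono (hsub1 s hs) (hsub2 s hs)) (hmeas2 s)
  have key4 : ∀ s : ℝ, 0 ≤ s → distFn μ f₁ s ≤ ENNReal.ofReal z := by
    intro s hs
    rw [← hsupp]
    exact measure_mono (hsub1 s hs)
  have hf2zero : ∀ s : ℝ, 0 ≤ s → N ≤ ENNReal.ofReal s → distFn μ f₂ s = 0 := by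
    intro s hs hNs
    have hae : ∀ᵐ x ∂μ, (‖f₂ x‖₊ : ℝ≥0∞) ≤ N := by
      rw [hN, eLpNorm_exponent_top]
      exact ae_le_eLpNormEssSup
    have h0 : μ {x | ¬ ((‖f₂ x‖₊ : ℝ≥0∞) ≤ N)} = 0 := ae_iff.mp hae
    refine measure_mono_null ?_ h0
    intro x hx
    simp only [Set.mem_setOf_eq] at hx ⊢
    intro hle
    have h1 : (‖f₂ x‖₊ : ℝ≥0∞) = ENNReal.ofReal |f₂ x| := by
      rw [← enorm_eq_nnnorm, ← ofReal_norm, Real.norm_eq_abs]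
    have h2 : ENNReal.ofReal s < ENNReal.ofReal |f₂ x| :=
      (ENNReal.ofReal_lt_ofReal_iff_of_nonneg hs).mpr hx
    rw [h1] at hle
    exact absurd (lt_of_le_of_lt hNs h2) (not_lt.2 hle)
  have hf1full : ∀ s : ℝ, 0 ≤ s → ENNReal.ofReal s < N →
      distFn μ f₁ s = ENNReal.ofReal z := by
    intro s hs hsN
    refine le_antisymm (key4 s hs) ?_
    rw [← hsupp]
    have hae : ∀ᵐ x ∂μ, f₁ x ≠ 0 → s < |f₁ x| := by
      filter_upwards [hbound] with x hx hne
      have h2 : ENNReal.ofReal s < ENNReal.ofReal |f₁ x| := lt_of_lt_of_le hsN (hx hne)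
      exact (ENNReal.ofReal_lt_ofReal_iff_of_nonneg hs).mp h2
    have h0 : μ {x | ¬ (f₁ x ≠ 0 → s < |f₁ x|)} = 0 := ae_iff.mp hae
    have hincl : Function.support f₁ ⊆
        {x | s < |f₁ x|} ∪ {x | ¬ (f₁ x ≠ 0 → s < |f₁ x|)} := by
      intro x hx
      by_cases h : s < |f₁ x|
      · exact Or.inl h
      · exact Or.inr (by simp only [Set.mem_setOf_eq]; tauto)
    calc μ (Function.support f₁)
        ≤ μ ({x | s < |f₁ x|} ∪ {x | ¬ (f₁ x ≠ 0 → s < |f₁ x|)}) := measure_mono hincl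
      _ ≤ μ {x | s < |f₁ x|} + μ {x | ¬ (f₁ x ≠ 0 → s < |f₁ x|)} := measure_union_le _ _
      _ = distFn μ f₁ s := by rw [h0, add_zero]; rfl
  have part1 : ∀ u : ℝ, 0 < u → u < z → rearr μ (f₁ + f₂) u = rearr μ f₁ u := by
    intro u hu huz
    unfold rearr
    congr 1
    ext s
    simp only [Set.mem_setOf_eq]
    constructor
    · rintro ⟨hs, hle⟩
      exact ⟨hs, le_trans (by rw [hdist_add s hs]; exact le_self_add) hle⟩
    · rintro ⟨hs, hle⟩
      refine ⟨hs, ?_⟩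
      rcases lt_or_ge (ENNReal.ofReal s) N with h | h
      · exfalso
        rw [hf1full s hs h] at hle
        exact absurd hle (not_le.2 ((ENNReal.ofReal_lt_ofReal_iff (hu.trans huz)).2 huz))
      · rw [hdist_add s hs, hf2zero s hs h, add_zero]
        exact hle
  refine ⟨part1, ?_, ?_⟩
  · intro u hzu
    unfold rearr
    congr 1
    ext s
    simp only [Set.mem_setOf_eq]
    have hzu' : ENNReal.ofReal z ≤ ENNReal.ofReal u := ENNReal.ofReal_le_ofReal hzu.le
    have hsubeq : ENNReal.ofReal (u - z) = ENNReal.ofReal u - ENNReal.ofReal z :=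
      ENNReal.ofReal_sub u hz
    constructor
    · rintro ⟨hs, hle⟩
      refine ⟨hs, ?_⟩
      rcases lt_or_ge (ENNReal.ofReal s) N with h | h
      · rw [hdist_add s hs, hf1full s hs h] at hle
        rw [hsubeq]
        exact ENNReal.le_sub_of_add_le_left ENNReal.ofReal_ne_top hle
      · rw [hf2zero s hs h]
        exact zero_le
    · rintro ⟨hs, hle⟩
      refine ⟨hs, ?_⟩
      rcases lt_or_ge (ENNReal.ofReal s) N with h | h
      · rw [hdist_add s hs, hf1full s hs h]
        rw [hsubeq] at hle
        calc ENNReal.ofReal z + distFn μ f₂ s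
            ≤ ENNReal.ofReal z + (ENNReal.ofReal u - ENNReal.ofReal z) :=
              add_le_add le_rfl hle
          _ = ENNReal.ofReal u := by
              rw [add_comm]
              exact tsub_add_cancel_of_le hzu'
      · rw [hdist_add s hs, hf2zero s hs h, add_zero]
        exact le_trans (key4 s hs) hzu'
  · intro u hu huz
    unfold rearrMax
    congr 1
    refine setIntegral_congr_ae measurableSet_Ioc ?_
    have hne : ∀ᵐ t : ℝ, t ≠ z := by
      rw [ae_iff]
      simp only [ne_eq, not_not, Set.setOf_eq_eq_singleton]
      exact Real.volume_singleton
    filter_upwards [hne] with t htne htmem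
    exact part1 t htmem.1 (lt_of_le_of_ne (le_trans htmem.2 huz) htne)
end
end

section
/- Let n ≥ 1 be an integer, α ∈ (0,n), H > 0, and let K : ℝ^n∖{0} → ℝ be measurable with |K(x)| ≤ H|x|^{α−n} for all x ≠ 0. Then there exists C = C(n,α,H) > 0 such that for every τ > 0, every measurable f : ℝ^n → ℝ supported in a set of Lebesgue measure at most τ with ‖f‖_{L^{n/α}(ℝ^n)} ≤ 1, and every R > 0, the average of |Tf| over the annulus A_R = {x : R ≤ |x| ≤ 2R} satisfies (1/|A_R|) ∫_{A_R} |Tf(x)| dx ≤ C R^{α−n} τ^{(n−α)/n}, where Tf(x) = ∫_{ℝ^n} K(x−y) f(y) dy. -/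
open MeasureTheory Metric
open scoped ENNReal

noncomputable section

/-- The convolution operator `Tf(x) = ∫ K(x-y) f(y) dy`. -/
def conv {n : ℕ} (K f : EuclideanSpace ℝ (Fin n) → ℝ) (x : EuclideanSpace ℝ (Fin n)) : ℝ :=
  ∫ y, K (x - y) * f y


/-- Dyadic bound for the Riesz kernel lintegral on a closed ball. -/
lemma riesz_ball_lintegral (n : ℕ) (hn : 1 ≤ n) (α : ℝ) (hα : 0 < α) (hαn : α < n) :
    ∃ c : ℝ≥0∞, c ≠ ∞ ∧ ∀ r : ℝ, 0 < r →
      ∫⁻ x in closedBall (0 : EuclideanSpace ℝ (Fin n)) r,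
          ENNReal.ofReal (‖x‖ ^ (α - (n : ℝ)))
        ≤ ENNReal.ofReal (r ^ α) * c := by
  set E := EuclideanSpace ℝ (Fin n)
  haveI : Nonempty (Fin n) := ⟨⟨0, hn⟩⟩
  haveI : Nontrivial E := inferInstance
  set V : ℝ≥0∞ := volume (ball (0 : E) 1) with hV
  have hVne : V ≠ ∞ := measure_ball_lt_top.ne
  have h2α : ENNReal.ofReal ((2 : ℝ) ^ (-α)) < 1 := by
    rw [← ENNReal.ofReal_one]
    exact ENNReal.ofReal_lt_ofReal_iff_of_nonneg (by positivity) |>.mpr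
      (Real.rpow_lt_one_of_one_lt_of_neg one_lt_two (neg_lt_zero.mpr hα))
  set q : ℝ≥0∞ := ENNReal.ofReal ((2 : ℝ) ^ (-α)) with hq
  have hgeo : (1 - q)⁻¹ ≠ ∞ := by
    rw [ENNReal.inv_ne_top]
    exact tsub_pos_of_lt h2α |>.ne'
  refine ⟨ENNReal.ofReal ((2 : ℝ) ^ ((n : ℝ) - α)) * ((1 - q)⁻¹ * V), ?_, ?_⟩
  · exact ENNReal.mul_ne_top ENNReal.ofReal_ne_top (ENNReal.mul_ne_top hgeo hVne)
  intro r hr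
  set g : E → ℝ≥0∞ := fun x => ENNReal.ofReal (‖x‖ ^ (α - (n : ℝ))) with hg
  set S : ℕ → Set E := fun k => closedBall (0 : E) (r / 2 ^ k) \ ball 0 (r / 2 ^ (k + 1)) with hS
  -- covering
  have hcover : closedBall (0 : E) r \ {0} ⊆ ⋃ k, S k := by
    intro x hx
    obtain ⟨hxr, hx0⟩ := hx
    have hxn : 0 < ‖x‖ := norm_pos_iff.mpr hx0
    have hxr' : ‖x‖ ≤ r := by simpa [dist_zero_right] using hxr
    have ht1 : (1 : ℝ) ≤ r / ‖x‖ := (one_le_div hxn).mpr hxr'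
    set m : ℕ := ⌊r / ‖x‖⌋₊ with hm
    have hm1 : 1 ≤ m := Nat.one_le_floor_iff _ |>.mpr ht1
    set k : ℕ := Nat.log 2 m with hk
    have h1 : (2 : ℝ) ^ k ≤ r / ‖x‖ := by
      calc ((2 : ℝ) ^ k) = ((2 ^ k : ℕ) : ℝ) := by push_cast; ring
        _ ≤ (m : ℝ) := by exact_mod_cast Nat.pow_log_le_self 2 (by omega)
        _ ≤ r / ‖x‖ := Nat.floor_le (by linarith)
    have h2 : r / ‖x‖ < (2 : ℝ) ^ (k + 1) := by
      calc r / ‖x‖ < (m : ℝ) + 1 := Nat.lt_floor_add_one _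
        _ ≤ (2 : ℝ) ^ (k + 1) := by
            have h := Nat.lt_pow_succ_log_self (b := 2) (by norm_num) m
            have h' : ((m : ℝ) + 1) ≤ ((2 ^ (k + 1) : ℕ) : ℝ) := by
              exact_mod_cast Nat.succ_le_of_lt h
            calc (m : ℝ) + 1 ≤ ((2 ^ (k + 1) : ℕ) : ℝ) := h'
              _ = (2 : ℝ) ^ (k + 1) := by push_cast; ring
    refine Set.mem_iUnion.mpr ⟨k, ?_, ?_⟩
    · rw [mem_closedBall, dist_zero_right, le_div_iff₀ (by positivity)]
      calc ‖x‖ * 2 ^ k ≤ ‖x‖ * (r / ‖x‖) := by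
            exact mul_le_mul_of_nonneg_left h1 (norm_nonneg x)
        _ = r := by field_simp
    · rw [mem_ball, dist_zero_right, not_lt, div_le_iff₀ (by positivity)]
      nlinarith [(div_lt_iff₀ hxn).mp h2]
  have hSvol : ∀ k : ℕ, ∫⁻ x in S k, g x ≤
      ENNReal.ofReal (r ^ α * (2 : ℝ) ^ ((n : ℝ) - α) * ((2 : ℝ) ^ (-α)) ^ k) * V := by
    intro k
    have hrk : (0 : ℝ) < r / 2 ^ (k + 1) := by positivity
    have hSm : MeasurableSet (S k) := measurableSet_closedBall.diff measurableSet_ball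
    have hbd : ∀ x ∈ S k, g x ≤ ENNReal.ofReal ((r / 2 ^ (k + 1)) ^ (α - (n : ℝ))) := by
      intro x hx
      obtain ⟨_, hx2⟩ := hx
      have hxk : r / 2 ^ (k + 1) ≤ ‖x‖ := by
        simpa [mem_ball, dist_zero_right, not_lt] using hx2
      exact ENNReal.ofReal_le_ofReal
        (Real.rpow_le_rpow_of_nonpos hrk hxk (by push_cast; linarith))
    calc ∫⁻ x in S k, g x
        ≤ ∫⁻ _ in S k, ENNReal.ofReal ((r / 2 ^ (k + 1)) ^ (α - (n : ℝ))) :=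
          setLIntegral_mono' hSm hbd
      _ = ENNReal.ofReal ((r / 2 ^ (k + 1)) ^ (α - (n : ℝ))) * volume (S k) := by
          rw [setLIntegral_const]
      _ ≤ ENNReal.ofReal ((r / 2 ^ (k + 1)) ^ (α - (n : ℝ))) *
            (ENNReal.ofReal ((r / 2 ^ k) ^ n) * V) := by
          gcongr
          have h := Measure.addHaar_closedBall (volume : Measure E) (0 : E)
            (r := r / 2 ^ k) (by positivity)
          rw [finrank_euclideanSpace_fin] at h
          exact (measure_mono Set.diff_subset).trans h.le
      _ = ENNReal.ofReal (r ^ α * (2 : ℝ) ^ ((n : ℝ) - α) * ((2 : ℝ) ^ (-α)) ^ k) * V := by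
          rw [← mul_assoc, ← ENNReal.ofReal_mul (by positivity)]
          congr 2
          have hb : (r / 2 ^ (k + 1)) ^ (α - (n : ℝ)) * (r / 2 ^ k) ^ (n : ℕ)
              = r ^ α * (2 : ℝ) ^ ((n : ℝ) - α) * ((2 : ℝ) ^ (-α)) ^ k := by
            have e1 : (r / 2 ^ (k + 1) : ℝ) = r * (2 : ℝ) ^ (-((k : ℝ) + 1)) := by
              rw [Real.rpow_neg (by norm_num), ← Real.rpow_natCast (2:ℝ) (k+1)]
              push_cast
              ring
            have e2 : (r / 2 ^ k : ℝ) ^ (n : ℕ) = (r * (2 : ℝ) ^ (-(k : ℝ))) ^ (n : ℝ) := by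
              rw [Real.rpow_natCast]
              congr 1
              rw [Real.rpow_neg (by norm_num), ← Real.rpow_natCast (2:ℝ) k]
              ring
            rw [e1, e2,
              Real.mul_rpow hr.le (by positivity), Real.mul_rpow hr.le (by positivity),
              ← Real.rpow_natCast ((2:ℝ) ^ (-α)) k, ← Real.rpow_mul (by norm_num : (0:ℝ) ≤ 2),
              ← Real.rpow_mul (by norm_num : (0:ℝ) ≤ 2),
              ← Real.rpow_mul (by norm_num : (0:ℝ) ≤ 2),
              ]
            rw [mul_mul_mul_comm, ← Real.rpow_add hr,
              ← Real.rpow_add (by norm_num : (0:ℝ) < 2), mul_assoc,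
              ← Real.rpow_add (by norm_num : (0:ℝ) < 2)]
            rw [show α - (n : ℝ) + (n : ℝ) = α by ring]
            congr 1
            ring
          exact hb
  calc ∫⁻ x in closedBall (0 : E) r, g x
      = ∫⁻ x in closedBall (0 : E) r \ {0}, g x := by
        refine (setLIntegral_congr ?_).symm
        exact MeasureTheory.diff_ae_eq_self.mpr
          (measure_mono_null Set.inter_subset_right (measure_singleton 0))
    _ ≤ ∫⁻ x in ⋃ k, S k, g x := lintegral_mono_set hcover
    _ ≤ ∑' k, ∫⁻ x in S k, g x := lintegral_iUnion_le _ _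
    _ ≤ ∑' k, ENNReal.ofReal (r ^ α * (2 : ℝ) ^ ((n : ℝ) - α) * ((2 : ℝ) ^ (-α)) ^ k) * V :=
        ENNReal.tsum_le_tsum hSvol
    _ = ENNReal.ofReal (r ^ α) * (ENNReal.ofReal ((2 : ℝ) ^ ((n : ℝ) - α)) * ((1 - q)⁻¹ * V)) := by
        have : ∀ k : ℕ, ENNReal.ofReal (r ^ α * (2 : ℝ) ^ ((n : ℝ) - α) * ((2 : ℝ) ^ (-α)) ^ k) * V
            = (ENNReal.ofReal (r ^ α) * ENNReal.ofReal ((2 : ℝ) ^ ((n : ℝ) - α)) * V) * q ^ k := by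
          intro k
          rw [ENNReal.ofReal_mul (by positivity), ENNReal.ofReal_mul (by positivity),
            ENNReal.ofReal_pow (by positivity)]
          ring
        simp_rw [this]
        rw [ENNReal.tsum_mul_left, ENNReal.tsum_geometric]
        ring

/-- Uniform-in-`y` bound for the Riesz kernel lintegral over the annulus. -/
lemma riesz_annulus_lintegral (n : ℕ) (hn : 1 ≤ n) (α : ℝ) (hα : 0 < α) (hαn : α < n) :
    ∃ c : ℝ≥0∞, c ≠ ∞ ∧ ∀ R : ℝ, 0 < R → ∀ y : EuclideanSpace ℝ (Fin n),
      ∫⁻ x in {x : EuclideanSpace ℝ (Fin n) | R ≤ ‖x‖ ∧ ‖x‖ ≤ 2 * R},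
          ENNReal.ofReal (‖x - y‖ ^ (α - (n : ℝ)))
        ≤ ENNReal.ofReal (R ^ α) * c := by
  set E := EuclideanSpace ℝ (Fin n)
  haveI : Nonempty (Fin n) := ⟨⟨0, hn⟩⟩
  haveI : Nontrivial E := inferInstance
  obtain ⟨c₁, hc₁, hball⟩ := riesz_ball_lintegral n hn α hα hαn
  set V : ℝ≥0∞ := volume (ball (0 : E) 1) with hV
  have hVne : V ≠ ∞ := measure_ball_lt_top.ne
  refine ⟨ENNReal.ofReal ((3 : ℝ) ^ α) * c₁
      + ENNReal.ofReal ((3 : ℝ) ^ (α - (n : ℝ)) * 2 ^ n) * V, ?_, ?_⟩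
  · refine ENNReal.add_ne_top.mpr ⟨ENNReal.mul_ne_top ENNReal.ofReal_ne_top hc₁,
      ENNReal.mul_ne_top ENNReal.ofReal_ne_top hVne⟩
  intro R hR y
  set A : Set E := {x : E | R ≤ ‖x‖ ∧ ‖x‖ ≤ 2 * R} with hA
  set g : E → ℝ≥0∞ := fun x => ENNReal.ofReal (‖x - y‖ ^ (α - (n : ℝ))) with hg
  have hAsub : A ⊆ closedBall (0 : E) (2 * R) := by
    intro x hx
    simpa [mem_closedBall, dist_zero_right] using hx.2
  have hsplit : A ⊆ closedBall y (3 * R) ∪ (A \ closedBall y (3 * R)) := by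
    intro x hx
    by_cases h : x ∈ closedBall y (3 * R)
    · exact Or.inl h
    · exact Or.inr ⟨hx, h⟩
  have hAm : MeasurableSet (A \ closedBall y (3 * R)) := by
    have : MeasurableSet A := by
      have : A = (fun x : E => ‖x‖) ⁻¹' (Set.Icc R (2 * R)) := by
        ext x; simp [hA, Set.mem_Icc]
      rw [this]
      exact measurable_norm measurableSet_Icc
    exact this.diff measurableSet_closedBall
  calc ∫⁻ x in A, g x
      ≤ ∫⁻ x in closedBall y (3 * R) ∪ (A \ closedBall y (3 * R)), g x :=
        lintegral_mono_set hsplit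
    _ ≤ (∫⁻ x in closedBall y (3 * R), g x) + ∫⁻ x in A \ closedBall y (3 * R), g x :=
        lintegral_union_le _ _ _
    _ ≤ ENNReal.ofReal ((3 : ℝ) ^ α) * ENNReal.ofReal (R ^ α) * c₁
        + ENNReal.ofReal ((3 : ℝ) ^ (α - (n : ℝ)) * 2 ^ n) * ENNReal.ofReal (R ^ α) * V := by
        gcongr
        · -- translated ball integral
          have hswap : ∫⁻ x in closedBall y (3 * R), g x
              = ∫⁻ x in closedBall (0 : E) (3 * R),
                  ENNReal.ofReal (‖x‖ ^ (α - (n : ℝ))) := by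
            have h := (measurePreserving_add_right (volume : Measure E) y).setLIntegral_comp_emb
              (MeasurableEquiv.addRight y).measurableEmbedding g (closedBall (0 : E) (3 * R))
            have himg : (fun z : E => z + y) '' closedBall (0 : E) (3 * R)
                = closedBall y (3 * R) := by
              ext z
              constructor
              · rintro ⟨w, hw, rfl⟩
                simpa [mem_closedBall, dist_eq_norm] using hw
              · intro hz
                refine ⟨z - y, ?_, by simp⟩
                rw [mem_closedBall, dist_zero_right, ← dist_eq_norm]; exact hz
            have hgy : ∀ a : E, g (a + y) = ENNReal.ofReal (‖a‖ ^ (α - (n : ℝ))) := by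
              intro a; simp [hg]
            rw [himg] at h
            rw [← h]
            exact setLIntegral_congr_fun measurableSet_closedBall
              (fun a _ => hgy a)
          rw [hswap]
          calc ∫⁻ x in closedBall (0 : E) (3 * R), ENNReal.ofReal (‖x‖ ^ (α - (n : ℝ)))
              ≤ ENNReal.ofReal ((3 * R) ^ α) * c₁ := hball _ (by positivity)
            _ = ENNReal.ofReal ((3:ℝ) ^ α) * ENNReal.ofReal (R ^ α) * c₁ := by
                rw [Real.mul_rpow (by norm_num) hR.le, ENNReal.ofReal_mul (by positivity)]
        · -- far part
          have hbd : ∀ x ∈ A \ closedBall y (3 * R),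
              g x ≤ ENNReal.ofReal ((3 * R) ^ (α - (n : ℝ))) := by
            intro x hx
            have h3R : 3 * R < ‖x - y‖ := by
              have := hx.2
              rw [← dist_eq_norm]; simpa [mem_closedBall, not_le] using this
            exact ENNReal.ofReal_le_ofReal
              (Real.rpow_le_rpow_of_nonpos (by positivity) h3R.le (by push_cast; linarith))
          calc ∫⁻ x in A \ closedBall y (3 * R), g x
              ≤ ∫⁻ _ in A \ closedBall y (3 * R), ENNReal.ofReal ((3 * R) ^ (α - (n : ℝ))) :=
                setLIntegral_mono' hAm hbd
            _ = ENNReal.ofReal ((3 * R) ^ (α - (n : ℝ))) * volume (A \ closedBall y (3 * R)) := by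
                rw [setLIntegral_const]
            _ ≤ ENNReal.ofReal ((3 * R) ^ (α - (n : ℝ))) *
                  (ENNReal.ofReal ((2 * R) ^ n) * V) := by
                gcongr
                have h := Measure.addHaar_closedBall (volume : Measure E) (0 : E)
                  (r := 2 * R) (by positivity)
                rw [finrank_euclideanSpace_fin] at h
                exact (measure_mono (Set.diff_subset.trans hAsub)).trans h.le
            _ = ENNReal.ofReal ((3 : ℝ) ^ (α - (n : ℝ)) * 2 ^ n) * ENNReal.ofReal (R ^ α) * V := by
                rw [← mul_assoc, ← ENNReal.ofReal_mul (by positivity),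
                  ← ENNReal.ofReal_mul (by positivity)]
                congr 2
                rw [Real.mul_rpow (by norm_num) hR.le, mul_pow, ← Real.rpow_natCast R n,
                  mul_mul_mul_comm, ← Real.rpow_add hR,
                  show α - (n : ℝ) + (n : ℝ) = α by ring]
    _ = ENNReal.ofReal (R ^ α) * (ENNReal.ofReal ((3 : ℝ) ^ α) * c₁
        + ENNReal.ofReal ((3 : ℝ) ^ (α - (n : ℝ)) * 2 ^ n) * V) := by ring

/-- Average of `|Tf|` over the annulus `{R ≤ |x| ≤ 2R}` for kernels bounded by
`H |x|^{α-n}`, when `f` is supported in a set of measure at most `τ` with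
`‖f‖_{n/α} ≤ 1`. -/
theorem annulus_average_bound
    (n : ℕ) (hn : 1 ≤ n) (α H : ℝ) (hα : 0 < α) (hαn : α < n) (hH : 0 < H)
    (K : EuclideanSpace ℝ (Fin n) → ℝ) (hK : Measurable K)
    (hKb : ∀ x : EuclideanSpace ℝ (Fin n), x ≠ 0 → |K x| ≤ H * ‖x‖ ^ (α - (n : ℝ))) :
    ∃ C > (0 : ℝ), ∀ τ > (0 : ℝ), ∀ f : EuclideanSpace ℝ (Fin n) → ℝ, Measurable f →
      (∃ S : Set (EuclideanSpace ℝ (Fin n)), MeasurableSet S ∧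
        volume S ≤ ENNReal.ofReal τ ∧ Function.support f ⊆ S) →
      eLpNorm f (ENNReal.ofReal ((n : ℝ) / α)) volume ≤ 1 →
      ∀ R > (0 : ℝ),
        (volume {x : EuclideanSpace ℝ (Fin n) | R ≤ ‖x‖ ∧ ‖x‖ ≤ 2 * R}).toReal⁻¹ *
            (∫ x in {x : EuclideanSpace ℝ (Fin n) | R ≤ ‖x‖ ∧ ‖x‖ ≤ 2 * R}, |conv K f x|)
          ≤ C * R ^ (α - (n : ℝ)) * τ ^ (((n : ℝ) - α) / (n : ℝ)) := by
  haveI : Nonempty (Fin n) := ⟨⟨0, hn⟩⟩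
  haveI : Nontrivial (EuclideanSpace ℝ (Fin n)) := inferInstance
  obtain ⟨c₂, hc₂, hker⟩ := riesz_annulus_lintegral n hn α hα hαn
  have hn0 : (0 : ℝ) < n := by exact_mod_cast Nat.lt_of_lt_of_le Nat.zero_lt_one hn
  set b : ℝ := (volume (ball (0 : EuclideanSpace ℝ (Fin n)) 1)).toReal with hbdef
  have hBne : volume (ball (0 : EuclideanSpace ℝ (Fin n)) 1) ≠ ∞ := measure_ball_lt_top.ne
  have hb : 0 < b := ENNReal.toReal_pos (measure_ball_pos _ _ one_pos).ne' hBne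
  have h21 : (0 : ℝ) < (2 : ℝ) ^ n - 1 := by
    have : (1 : ℝ) < 2 ^ n := one_lt_pow₀ (by norm_num) (by omega)
    linarith
  have hCpos : 0 < H * (c₂.toReal + 1) * (((2 : ℝ) ^ n - 1) * b)⁻¹ := by
    apply mul_pos (mul_pos hH (by positivity))
    exact inv_pos.mpr (mul_pos h21 hb)
  refine ⟨H * (c₂.toReal + 1) * (((2 : ℝ) ^ n - 1) * b)⁻¹, hCpos, ?_⟩
  intro τ hτ f hf hS hnorm R hR
  obtain ⟨S, hSm, hSτ, hfS⟩ := hS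
  set β : ℝ := ((n : ℝ) - α) / (n : ℝ) with hβ
  have hβ0 : 0 ≤ β := by
    apply div_nonneg _ hn0.le
    linarith
  set A : Set (EuclideanSpace ℝ (Fin n)) := {x : EuclideanSpace ℝ (Fin n) | R ≤ ‖x‖ ∧ ‖x‖ ≤ 2 * R} with hAdef
  have hAeq : A = closedBall (0 : EuclideanSpace ℝ (Fin n)) (2 * R) \ ball 0 R := by
    ext x
    simp [hAdef, mem_closedBall, mem_ball, dist_zero_right, not_lt, and_comm]
  -- volume of the annulus
  have hcb : volume (closedBall (0 : EuclideanSpace ℝ (Fin n)) (2 * R)) = ENNReal.ofReal ((2 * R) ^ n) * volume (ball (0 : EuclideanSpace ℝ (Fin n)) 1) := by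
    rw [Measure.addHaar_closedBall _ _ (by positivity : (0:ℝ) ≤ 2 * R), finrank_euclideanSpace_fin]
  have hbl : volume (ball (0 : EuclideanSpace ℝ (Fin n)) R) = ENNReal.ofReal (R ^ n) * volume (ball (0 : EuclideanSpace ℝ (Fin n)) 1) := by
    rw [Measure.addHaar_ball _ _ hR.le, finrank_euclideanSpace_fin]
  have hvolA : (volume A).toReal = ((2 : ℝ) ^ n - 1) * b * R ^ n := by
    rw [hAeq, measure_diff (ball_subset_closedBall.trans (closedBall_subset_closedBall (by linarith)))
      measurableSet_ball.nullMeasurableSet measure_ball_lt_top.ne, hcb, hbl,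
      ENNReal.toReal_sub_of_le ?hle ?htop]
    · rw [ENNReal.toReal_mul, ENNReal.toReal_mul, ENNReal.toReal_ofReal (by positivity),
        ENNReal.toReal_ofReal (by positivity), ← hbdef]
      ring
    case hle =>
      exact mul_le_mul_left (ENNReal.ofReal_le_ofReal
        (pow_le_pow_left₀ hR.le (by linarith) n)) _
    case htop => exact ENNReal.mul_ne_top ENNReal.ofReal_ne_top hBne
  -- measurability of conv
  have hconv : Measurable (conv K f) := by
    have h1 : Measurable fun p : EuclideanSpace ℝ (Fin n) × EuclideanSpace ℝ (Fin n) => K (p.1 - p.2) * f p.2 :=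
      (hK.comp (measurable_fst.sub measurable_snd)).mul (hf.comp measurable_snd)
    exact h1.stronglyMeasurable.integral_prod_right'.measurable
  -- pointwise bound
  set G : EuclideanSpace ℝ (Fin n) → EuclideanSpace ℝ (Fin n) → ℝ≥0∞ := fun x y => ENNReal.ofReal (‖x - y‖ ^ (α - (n : ℝ))) * ‖f y‖₊ with hG
  have hGm : Measurable (Function.uncurry G) := by
    refine Measurable.mul (f := fun p : EuclideanSpace ℝ (Fin n) × EuclideanSpace ℝ (Fin n) => ENNReal.ofReal (‖p.1 - p.2‖ ^ (α - (n : ℝ)))) (g := fun p => (‖f p.2‖₊ : ℝ≥0∞)) ?_ ?_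
    · exact ((measurable_fst.sub measurable_snd).norm.pow measurable_const).ennreal_ofReal
    · exact (hf.comp measurable_snd).nnnorm.coe_nnreal_ennreal
  have hpt : ∀ x : EuclideanSpace ℝ (Fin n), ENNReal.ofReal |conv K f x| ≤ ENNReal.ofReal H * ∫⁻ y, G x y := by
    intro x
    rw [← Real.enorm_eq_ofReal_abs]
    calc (‖conv K f x‖₊ : ℝ≥0∞) ≤ ∫⁻ y, ‖K (x - y) * f y‖₊ :=
        enorm_integral_le_lintegral_enorm _
      _ ≤ ∫⁻ y, ENNReal.ofReal H * G x y := by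
          refine lintegral_mono_ae ?_
          have hae : ∀ᵐ y : EuclideanSpace ℝ (Fin n), y ≠ x := by
            refine ae_iff.mpr ?_
            have : {y : EuclideanSpace ℝ (Fin n) | ¬ y ≠ x} = {x} := by ext y; simp
            rw [this]
            exact measure_singleton x
          filter_upwards [hae] with y hy
          have hxy : x - y ≠ 0 := sub_ne_zero.mpr (Ne.symm hy)
          calc (‖K (x - y) * f y‖₊ : ℝ≥0∞) = (‖K (x - y)‖₊ : ℝ≥0∞) * ‖f y‖₊ := by
                rw [nnnorm_mul]; push_cast; ring
            _ ≤ ENNReal.ofReal (H * ‖x - y‖ ^ (α - (n : ℝ))) * ‖f y‖₊ := by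
                gcongr
                rw [← enorm_eq_nnnorm, Real.enorm_eq_ofReal_abs]
                exact ENNReal.ofReal_le_ofReal (hKb _ hxy)
            _ = ENNReal.ofReal H * G x y := by
                rw [ENNReal.ofReal_mul hH.le, hG, mul_assoc]
      _ = ENNReal.ofReal H * ∫⁻ y, G x y := lintegral_const_mul' _ _ ENNReal.ofReal_ne_top
  -- Hölder: L¹ norm of f
  have hfL1 : ∫⁻ y, (‖f y‖₊ : ℝ≥0∞) ≤ ENNReal.ofReal (τ ^ β) := by
    set p : ℝ≥0∞ := ENNReal.ofReal ((n : ℝ) / α) with hp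
    have hp1 : (1 : ℝ≥0∞) ≤ p := by
      rw [hp, ← ENNReal.ofReal_one]
      exact ENNReal.ofReal_le_ofReal ((one_le_div hα).mpr hαn.le)
    have hsupp : (Function.support fun y => (‖f y‖₊ : ℝ≥0∞)) ⊆ S := by
      intro y hy
      apply hfS
      simp only [Function.mem_support] at hy ⊢
      intro h0
      apply hy
      simp [h0]
    have e0 : ∫⁻ y, (‖f y‖₊ : ℝ≥0∞) = ∫⁻ y in S, (‖f y‖₊ : ℝ≥0∞) :=
      (setLIntegral_eq_of_support_subset hsupp).symm
    have hH2 := eLpNorm_le_eLpNorm_mul_rpow_measure_univ (μ := volume.restrict S) hp1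
      hf.aestronglyMeasurable
    rw [Measure.restrict_apply_univ] at hH2
    have hq : p.toReal = (n : ℝ) / α := ENNReal.toReal_ofReal (by positivity)
    have hexp : 1 / (1 : ℝ≥0∞).toReal - 1 / p.toReal = β := by
      rw [hq, hβ]
      simp only [ENNReal.toReal_one]
      rw [one_div_div]
      field_simp
    have hle2 : eLpNorm f p (volume.restrict S) ≤ 1 :=
      le_trans (eLpNorm_mono_measure f Measure.restrict_le_self) hnorm
    calc ∫⁻ y, (‖f y‖₊ : ℝ≥0∞) = eLpNorm f 1 (volume.restrict S) := by
          simp only [e0, eLpNorm_one_eq_lintegral_enorm, enorm_eq_nnnorm]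
      _ ≤ eLpNorm f p (volume.restrict S) * volume S ^ (1 / (1 : ℝ≥0∞).toReal - 1 / p.toReal) :=
          hH2
      _ ≤ 1 * (ENNReal.ofReal τ) ^ β := by
          rw [hexp]
          gcongr
      _ = ENNReal.ofReal (τ ^ β) := by rw [one_mul, ENNReal.ofReal_rpow_of_pos hτ]
  -- main lintegral bound
  have hkey : ∫⁻ x in A, ENNReal.ofReal |conv K f x| ≤
      ENNReal.ofReal H * ((ENNReal.ofReal (R ^ α) * c₂) * ENNReal.ofReal (τ ^ β)) := by
    calc ∫⁻ x in A, ENNReal.ofReal |conv K f x|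
        ≤ ∫⁻ x in A, ENNReal.ofReal H * ∫⁻ y, G x y := lintegral_mono fun x => hpt x
      _ = ENNReal.ofReal H * ∫⁻ x in A, ∫⁻ y, G x y :=
          lintegral_const_mul' _ _ ENNReal.ofReal_ne_top
      _ = ENNReal.ofReal H * ∫⁻ y, ∫⁻ x in A, G x y := by
          rw [lintegral_lintegral_swap hGm.aemeasurable]
      _ ≤ ENNReal.ofReal H * ∫⁻ y, (‖f y‖₊ : ℝ≥0∞) * (ENNReal.ofReal (R ^ α) * c₂) := by
          gcongr with y
          calc ∫⁻ x in A, G x y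
              = (∫⁻ x in A, ENNReal.ofReal (‖x - y‖ ^ (α - (n : ℝ)))) * ‖f y‖₊ :=
                lintegral_mul_const' _ _ ENNReal.coe_ne_top
            _ ≤ (ENNReal.ofReal (R ^ α) * c₂) * ‖f y‖₊ := by
                gcongr
                exact hker R hR y
            _ = (‖f y‖₊ : ℝ≥0∞) * (ENNReal.ofReal (R ^ α) * c₂) := mul_comm _ _
      _ = ENNReal.ofReal H * ((∫⁻ y, (‖f y‖₊ : ℝ≥0∞)) * (ENNReal.ofReal (R ^ α) * c₂)) := by
          rw [lintegral_mul_const' _ _ (ENNReal.mul_ne_top ENNReal.ofReal_ne_top hc₂)]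
      _ ≤ ENNReal.ofReal H * (ENNReal.ofReal (τ ^ β) * (ENNReal.ofReal (R ^ α) * c₂)) := by
          gcongr
      _ = ENNReal.ofReal H * ((ENNReal.ofReal (R ^ α) * c₂) * ENNReal.ofReal (τ ^ β)) := by
          ring
  -- from lintegral to integral
  have hfin : ENNReal.ofReal H * ((ENNReal.ofReal (R ^ α) * c₂) * ENNReal.ofReal (τ ^ β)) ≠ ∞ :=
    ENNReal.mul_ne_top ENNReal.ofReal_ne_top
      (ENNReal.mul_ne_top (ENNReal.mul_ne_top ENNReal.ofReal_ne_top hc₂) ENNReal.ofReal_ne_top)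
  have hint : ∫ x in A, |conv K f x| ≤ H * (R ^ α * c₂.toReal * τ ^ β) := by
    rw [integral_eq_lintegral_of_nonneg_ae (Filter.Eventually.of_forall fun x => abs_nonneg _)
      hconv.abs.aestronglyMeasurable.restrict]
    have := ENNReal.toReal_mono hfin hkey
    refine this.trans_eq ?_
    rw [ENNReal.toReal_mul, ENNReal.toReal_mul, ENNReal.toReal_mul,
      ENNReal.toReal_ofReal hH.le, ENNReal.toReal_ofReal (by positivity),
      ENNReal.toReal_ofReal (by positivity)]
    try ring
  -- final arithmetic
  have hRsub : R ^ (α - (n : ℝ)) = R ^ α * ((R : ℝ) ^ n)⁻¹ := by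
    rw [Real.rpow_sub hR, div_eq_mul_inv, Real.rpow_natCast]
  calc (volume A).toReal⁻¹ * ∫ x in A, |conv K f x|
      ≤ (volume A).toReal⁻¹ * (H * (R ^ α * c₂.toReal * τ ^ β)) := by
        apply mul_le_mul_of_nonneg_left hint (inv_nonneg.mpr ENNReal.toReal_nonneg)
    _ = (H * c₂.toReal) * ((((2 : ℝ) ^ n - 1) * b)⁻¹ * (((R : ℝ) ^ n)⁻¹ * (R ^ α * τ ^ β))) := by
        rw [hvolA, mul_inv]
        ring
    _ ≤ (H * (c₂.toReal + 1)) * ((((2 : ℝ) ^ n - 1) * b)⁻¹ * (((R : ℝ) ^ n)⁻¹ * (R ^ α * τ ^ β))) := by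
        apply mul_le_mul_of_nonneg_right
        · nlinarith [hH.le, ENNReal.toReal_nonneg (a := c₂)]
        · apply mul_nonneg (inv_nonneg.mpr (mul_nonneg h21.le hb.le))
          positivity
    _ = H * (c₂.toReal + 1) * (((2 : ℝ) ^ n - 1) * b)⁻¹ * R ^ (α - (n : ℝ)) * τ ^ β := by
        rw [hRsub]
        ring
end
end
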